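/- Let R ∈ F[[X]] and suppose that Q(X, 1, R(X)) ≠ 0 for every nonzero Q ∈ Q^{(n)} and every n ≥ 1, where Q^{(n)} is the set of polynomials Σ_{j<n} (T_{ω_j}(Y_1,Y_2) − T_{ω'_j}(Y_1,Y_2)) X^j. Then for every N ≥ 1 there exists n ≥ N with H(A_R^{(n)}; 4n) = n·H(p); that is, the first 4n coefficients of A_R^{(n)} determine the digits ξ_0,…,ξ_{n-1} and have full entropy. -/

import Mathlib

open Filter

/-- Shannon entropy of a discrete probability measure. -/
noncomputable def pmfEntropy {α : Type*} (q : PMF α) : ℝ :=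
  ∑' a, Real.negMulLog ((q a).toReal)

/-- Law of the word `(ξ_0, …, ξ_{n-1})` of `n` i.i.d. digits with common law `ξ`. -/
noncomputable def iidWord {m : ℕ} (ξ : PMF (Fin m)) : (n : ℕ) → PMF (Fin n → Fin m)
  | 0 => PMF.pure (fun i => i.elim0)
  | n + 1 => (iidWord ξ n).bind fun ω => ξ.map fun x => Fin.snoc ω x

/-- `A_R^{(n)}(ω) = Σ_{j<n} T_{ω_j}(1, R(X)) X^j ∈ F[[X]]`, where
`T_j(Y₁,Y₂) = a_j Y₁ + b_j Y₂`. -/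
noncomputable def ARfun {F : Type*} [Field F] {m : ℕ} (a b : Fin m → ℤ)
    (R : PowerSeries F) {n : ℕ} (ω : Fin n → Fin m) : PowerSeries F :=
  ∑ j : Fin n,
    ((PowerSeries.C ((a (ω j) : ℤ) : F)) + (PowerSeries.C ((b (ω j) : ℤ) : F)) * R) *
      PowerSeries.X ^ (j : ℕ)

/-- `H(A_R^{(n)}; k)`: the Shannon entropy of the first `k` coefficients of `A_R^{(n)}`. -/
noncomputable def Hcoeff {F : Type*} [Field F] {m : ℕ} (ξ : PMF (Fin m))
    (a b : Fin m → ℤ) (R : PowerSeries F) (n k : ℕ) : ℝ :=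
  pmfEntropy ((iidWord ξ n).map fun ω => fun i : Fin k => PowerSeries.coeff i (ARfun a b R ω))

/-! ### Auxiliary entropy lemmas -/

lemma pmf_map_apply_of_injective {α β : Type*} (q : PMF α) {f : α → β}
    (hf : Function.Injective f) (a : α) : (q.map f) (f a) = q a := by
  classical
  rw [PMF.map_apply]
  refine (tsum_congr fun a' => ?_).trans (tsum_ite_eq a (fun _ => q a))
  split_ifs with h1 h2 h2
  · rw [h2]
  · exact absurd (hf h1).symm h2
  · exact absurd (congrArg f h2.symm) h1
  · rfl

lemma pmf_map_apply_of_not_mem_range {α β : Type*} (q : PMF α) {f : α → β}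
    {b : β} (hb : b ∉ Set.range f) : (q.map f) b = 0 := by
  rw [PMF.map_apply]
  convert tsum_zero with a
  rw [if_neg]
  rintro rfl
  exact hb ⟨a, rfl⟩

lemma pmfEntropy_map_injective {α β : Type*} (q : PMF α) {f : α → β}
    (hf : Function.Injective f) : pmfEntropy (q.map f) = pmfEntropy q := by
  unfold pmfEntropy
  rw [← hf.tsum_eq (f := fun b => Real.negMulLog (((q.map f) b).toReal))]
  · exact tsum_congr fun a => by rw [pmf_map_apply_of_injective q hf]
  · intro b hb
    rcases Classical.em (b ∈ Set.range f) with h | h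
    · exact h
    · exfalso
      apply hb
      simp [pmf_map_apply_of_not_mem_range q h, Real.negMulLog_zero]

lemma pmfEntropy_fintype {α : Type*} [Fintype α] (q : PMF α) :
    pmfEntropy q = ∑ a, Real.negMulLog ((q a).toReal) := tsum_fintype _

lemma pmf_sum_toReal_eq_one {α : Type*} [Fintype α] (q : PMF α) :
    ∑ a, ((q a).toReal) = 1 := by
  have h := q.tsum_coe
  rw [tsum_fintype] at h
  have h2 : (∑ a, q a).toReal = (1 : ENNReal).toReal := by rw [h]
  rwa [ENNReal.toReal_sum (fun a _ => q.apply_ne_top a), ENNReal.toReal_one] at h2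

lemma pmfEntropy_pure {α : Type*} (x : α) : pmfEntropy (PMF.pure x) = 0 := by
  unfold pmfEntropy
  convert tsum_zero with b
  rw [PMF.pure_apply]
  split_ifs <;> simp

lemma iidWord_succ_apply {m n : ℕ} (ξ : PMF (Fin m)) (τ : Fin (n+1) → Fin m) :
    iidWord ξ (n+1) τ = iidWord ξ n (Fin.init τ) * ξ (τ (Fin.last n)) := by
  show ((iidWord ξ n).bind fun ω => ξ.map fun x => Fin.snoc ω x) τ = _
  rw [PMF.bind_apply]
  have inner : ∀ ω : Fin n → Fin m,
      (ξ.map fun x => Fin.snoc ω x) τ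
        = if ω = Fin.init τ then ξ (τ (Fin.last n)) else 0 := by
    intro ω
    rw [PMF.map_apply]
    by_cases hω : ω = Fin.init τ
    · subst hω
      rw [if_pos rfl]
      refine (tsum_congr fun x => ?_).trans (tsum_ite_eq (τ (Fin.last n)) (fun _ => ξ (τ (Fin.last n))))
      split_ifs with h1 h2 h2
      · rw [h2]
      · exfalso; apply h2
        have := congrFun h1 (Fin.last n)
        simpa [Fin.snoc_last] using this.symm
      · exfalso; apply h1
        rw [h2]
        exact (Fin.snoc_init_self τ).symm
      · rfl
    · rw [if_neg hω]
      convert tsum_zero with x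
      rw [if_neg]
      intro h
      apply hω
      have := congrArg Fin.init h
      simpa [Fin.init_snoc] using this.symm
  calc ∑' ω, iidWord ξ n ω * (ξ.map fun x => Fin.snoc ω x) τ
      = ∑' ω, (if ω = Fin.init τ then iidWord ξ n (Fin.init τ) * ξ (τ (Fin.last n)) else 0) := by
        refine tsum_congr fun ω => ?_
        rw [inner ω]
        split_ifs with h
        · rw [h]
        · rw [mul_zero]
    _ = iidWord ξ n (Fin.init τ) * ξ (τ (Fin.last n)) := tsum_ite_eq _ _

lemma pmfEntropy_iidWord {m : ℕ} (ξ : PMF (Fin m)) (n : ℕ) :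
    pmfEntropy (iidWord ξ n) = (n : ℝ) * pmfEntropy ξ := by
  induction n with
  | zero => simp [iidWord, pmfEntropy_pure]
  | succ n ih =>
    have key : pmfEntropy (iidWord ξ (n+1)) = pmfEntropy (iidWord ξ n) + pmfEntropy ξ := by
      rw [pmfEntropy_fintype, pmfEntropy_fintype (iidWord ξ n), pmfEntropy_fintype ξ]
      rw [← Equiv.sum_comp (Fin.snocEquiv (fun _ : Fin (n+1) => Fin m))
        (fun τ => Real.negMulLog ((iidWord ξ (n+1) τ).toReal))]
      have : ∀ p : Fin m × (Fin n → Fin m),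
          Real.negMulLog ((iidWord ξ (n+1) ((Fin.snocEquiv (fun _ : Fin (n+1) => Fin m)) p)).toReal)
            = (ξ p.1).toReal * Real.negMulLog ((iidWord ξ n p.2).toReal)
              + (iidWord ξ n p.2).toReal * Real.negMulLog ((ξ p.1).toReal) := by
        rintro ⟨x, ω⟩
        have he : (Fin.snocEquiv (fun _ : Fin (n+1) => Fin m)) (x, ω) = Fin.snoc ω x := rfl
        rw [he, iidWord_succ_apply]
        simp only [Fin.init_snoc, Fin.snoc_last]
        rw [ENNReal.toReal_mul, Real.negMulLog_mul]
      rw [Finset.sum_congr rfl (fun p _ => this p), Fintype.sum_prod_type]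
      have h1 : ∀ x : Fin m,
          (∑ ω : Fin n → Fin m, ((ξ x).toReal * Real.negMulLog ((iidWord ξ n ω).toReal)
            + (iidWord ξ n ω).toReal * Real.negMulLog ((ξ x).toReal)))
          = (ξ x).toReal * (∑ ω, Real.negMulLog ((iidWord ξ n ω).toReal))
            + Real.negMulLog ((ξ x).toReal) := by
        intro x
        rw [Finset.sum_add_distrib, ← Finset.mul_sum, ← Finset.sum_mul,
          pmf_sum_toReal_eq_one, one_mul]
      rw [Finset.sum_congr rfl (fun x _ => h1 x), Finset.sum_add_distrib, ← Finset.sum_mul,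
        pmf_sum_toReal_eq_one, one_mul]
    rw [key, ih]
    push_cast
    ring

/-! ### Auxiliary power series lemmas -/

open PowerSeries in
lemma coeff_sum_C_mul_X_pow {F : Type*} [Field F] {n : ℕ} (c : Fin n → F) (i : ℕ) (hi : n ≤ i) :
    coeff i (∑ j : Fin n, C (c j) * X ^ (j : ℕ)) = 0 := by
  rw [map_sum]
  refine Finset.sum_eq_zero fun j _ => ?_
  rw [coeff_C_mul, coeff_X_pow, if_neg, mul_zero]
  omega

open PowerSeries in
lemma eq_zero_of_trunc {F : Type*} [Field F] {f : PowerSeries F} {n : ℕ}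
    (h1 : ∀ i, n ≤ i → coeff i f = 0) (h2 : (n : ℕ∞) ≤ f.order) : f = 0 := by
  ext i
  rcases lt_or_ge i n with hi | hi
  · exact coeff_of_lt_order i (lt_of_lt_of_le (by exact_mod_cast hi) h2)
  · simpa using h1 i hi

open PowerSeries in
lemma coeff_mul_eq_zero {F : Type*} [Field F] {f g : PowerSeries F} {p q : ℕ}
    (hf : ∀ i, p ≤ i → coeff i f = 0) (hg : ∀ i, q ≤ i → coeff i g = 0)
    (i : ℕ) (hi : p + q ≤ i) : coeff i (f * g) = 0 := by
  rw [coeff_mul]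
  refine Finset.sum_eq_zero fun x hx => ?_
  rw [Finset.HasAntidiagonal.mem_antidiagonal] at hx
  rcases le_or_gt p x.1 with h | h
  · rw [hf x.1 h, zero_mul]
  · rw [hg x.2 (by omega), mul_zero]

open PowerSeries in
lemma ARfun_sub {F : Type*} [Field F] {m : ℕ} (a b : Fin m → ℤ) (R : PowerSeries F)
    {n : ℕ} (ω ω' : Fin n → Fin m) :
    ARfun a b R ω - ARfun a b R ω'
      = (∑ j : Fin n, C (((a (ω j) - a (ω' j) : ℤ) : F)) * X ^ (j : ℕ))
        + (∑ j : Fin n, C (((b (ω j) - b (ω' j) : ℤ) : F)) * X ^ (j : ℕ)) * R := by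
  unfold ARfun
  rw [← Finset.sum_sub_distrib, Finset.sum_mul, ← Finset.sum_add_distrib]
  refine Finset.sum_congr rfl fun j _ => ?_
  push_cast
  rw [map_sub, map_sub]
  ring

open PowerSeries in
lemma order_neg' {F : Type*} [Field F] (f : PowerSeries F) : (-f).order = f.order := by
  have key : ∀ g : PowerSeries F, g.order ≤ (-g).order := by
    intro g
    refine le_order _ _ fun i hi => ?_
    rw [map_neg, coeff_of_lt_order i hi, neg_zero]
  refine le_antisymm ?_ (key f)
  have := key (-f)
  rwa [neg_neg] at this

/-! ### The key injectivity lemma -/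

open PowerSeries in
lemma key_injective {F : Type*} [Field F] {m : ℕ} (a b : Fin m → ℤ)
    (R : PowerSeries F)
    (hno : ∀ (n : ℕ) (ω ω' : Fin n → Fin m), ω ≠ ω' → ARfun a b R ω ≠ ARfun a b R ω')
    (N : ℕ) (hN : 1 ≤ N) :
    ∃ n, N ≤ n ∧ Function.Injective
      (fun ω : Fin n → Fin m => fun i : Fin (4 * n) => coeff i (ARfun a b R ω)) := by
  by_contra hcon
  push_neg at hcon
  -- for each k, at n = N + k the truncation is not injective
  have hex : ∀ k : ℕ, ∃ p : (Fin (N+k) → Fin m) × (Fin (N+k) → Fin m),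
      p.1 ≠ p.2 ∧ ∀ i : Fin (4 * (N+k)), coeff i (ARfun a b R p.1) = coeff i (ARfun a b R p.2) := by
    intro k
    obtain ⟨ω, ω', hfe, hne⟩ := Function.not_injective_iff.mp (hcon (N+k) (Nat.le_add_right N k))
    exact ⟨⟨ω, ω'⟩, hne, fun i => congrFun hfe i⟩
  choose pr hne hfe using hex
  set D : ℕ → PowerSeries F := fun k => ARfun a b R (pr k).1 - ARfun a b R (pr k).2 with hD
  set P1 : ℕ → PowerSeries F := fun k =>
    ∑ j : Fin (N+k), C (((a ((pr k).1 j) - a ((pr k).2 j) : ℤ) : F)) * X ^ (j : ℕ) with hP1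
  set P2 : ℕ → PowerSeries F := fun k =>
    ∑ j : Fin (N+k), C (((b ((pr k).1 j) - b ((pr k).2 j) : ℤ) : F)) * X ^ (j : ℕ) with hP2
  have hdecomp : ∀ k, D k = P1 k + P2 k * R := fun k => ARfun_sub a b R _ _
  have hDne : ∀ k, D k ≠ 0 := by
    intro k h
    exact hno _ _ _ (hne k) (sub_eq_zero.mp h)
  have hDord : ∀ k, ((4 * (N+k) : ℕ) : ℕ∞) ≤ (D k).order := by
    intro k
    apply nat_le_order
    intro i hi
    rw [hD, map_sub, hfe k ⟨i, hi⟩, sub_self]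
  have hP1c : ∀ k i, N + k ≤ i → coeff i (P1 k) = 0 := fun k i hi =>
    coeff_sum_C_mul_X_pow _ i hi
  have hP2c : ∀ k i, N + k ≤ i → coeff i (P2 k) = 0 := fun k i hi =>
    coeff_sum_C_mul_X_pow _ i hi
  have hP2ne : ∀ k, P2 k ≠ 0 := by
    intro k h
    apply hDne k
    have hDk : D k = P1 k := by rw [hdecomp k, h, zero_mul, add_zero]
    have : D k = 0 := by
      apply eq_zero_of_trunc (n := N + k)
      · intro i hi; rw [hDk]; exact hP1c k i hi
      · exact le_trans (by exact_mod_cast by omega) (hDord k)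
    exact this
  -- cross identity
  have hcross : ∀ k, P2 (k+1) * D k = P2 k * D (k+1) := by
    intro k
    have hQ : P2 (k+1) * D k - P2 k * D (k+1)
        = P2 (k+1) * P1 k - P2 k * P1 (k+1) := by
      rw [hdecomp k, hdecomp (k+1)]; ring
    have hQcoeff : ∀ i, (N+(k+1)) + (N+k) ≤ i →
        coeff i (P2 (k+1) * P1 k - P2 k * P1 (k+1)) = 0 := by
      intro i hi
      rw [map_sub, coeff_mul_eq_zero (hP2c (k+1)) (hP1c k) i hi,
        coeff_mul_eq_zero (hP2c k) (hP1c (k+1)) i (by omega), sub_self]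
    have hQord : ((4 * (N+k) : ℕ) : ℕ∞) ≤ (P2 (k+1) * D k - P2 k * D (k+1)).order := by
      rw [sub_eq_add_neg]
      refine le_trans ?_ (min_order_le_order_add _ _)
      rw [le_min_iff]
      constructor
      · refine le_trans ?_ (le_order_mul _ _)
        calc ((4 * (N+k) : ℕ) : ℕ∞) ≤ (D k).order := hDord k
          _ ≤ (P2 (k+1)).order + (D k).order := le_add_self
      · rw [order_neg']
        refine le_trans ?_ (le_order_mul _ _)
        calc ((4 * (N+k) : ℕ) : ℕ∞) ≤ (D (k+1)).order :=
            le_trans (by exact_mod_cast by omega) (hDord (k+1))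
          _ ≤ (P2 k).order + (D (k+1)).order := le_add_self
    have hQ0 : P2 (k+1) * D k - P2 k * D (k+1) = 0 := by
      apply eq_zero_of_trunc (n := (N+(k+1)) + (N+k))
      · intro i hi; rw [hQ]; exact hQcoeff i hi
      · refine le_trans ?_ hQord
        exact_mod_cast by omega
    exact sub_eq_zero.mp hQ0
  -- orders as naturals
  set f : ℕ → ℕ := fun k => ((D k).order).toNat with hf
  set g : ℕ → ℕ := fun k => ((P2 k).order).toNat with hg
  have hDfin : ∀ k, (D k).order ≠ ⊤ := fun k => order_eq_top.not.mpr (hDne k)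
  have hPfin : ∀ k, (P2 k).order ≠ ⊤ := fun k => order_eq_top.not.mpr (hP2ne k)
  have hfc : ∀ k, ((f k : ℕ) : ℕ∞) = (D k).order := fun k => ENat.coe_toNat (hDfin k)
  have hgc : ∀ k, ((g k : ℕ) : ℕ∞) = (P2 k).order := fun k => ENat.coe_toNat (hPfin k)
  have hflb : ∀ k, 4 * (N + k) ≤ f k := by
    intro k
    have := hDord k
    rw [← hfc k] at this
    exact_mod_cast this
  have hgub : ∀ k, g k ≤ N + k := by
    intro k
    have hle : (P2 k).order ≤ ((N + k : ℕ) : ℕ∞) := by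
      by_contra h
      push_neg at h
      apply hP2ne k
      ext i
      rcases lt_or_ge i (N + k) with hi | hi
      · simpa using coeff_of_lt_order i (lt_of_le_of_lt (by exact_mod_cast hi.le) h)
      · simpa using hP2c k i hi
    rw [← hgc k] at hle
    exact_mod_cast hle
  have hstep : ∀ k, g (k+1) + f k = g k + f (k+1) := by
    intro k
    have := hcross k
    have horder : (P2 (k+1)).order + (D k).order = (P2 k).order + (D (k+1)).order := by
      rw [← order_mul, ← order_mul, this]
    rw [← hfc, ← hfc, ← hgc, ← hgc] at horder
    exact_mod_cast horder
  have hconst : ∀ k, f k + g 0 = f 0 + g k := by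
    intro k
    induction k with
    | zero => omega
    | succ k ih =>
      have := hstep k
      omega
  have h1 := hconst (f 0)
  have h2 := hflb (f 0)
  have h3 := hgub (f 0)
  omega

/-- If `Q(X,1,R(X)) ≠ 0` for every nonzero `Q ∈ Q^{(n)}` and every `n` (equivalently,
distinct digit words always give distinct functions `A_R^{(n)}`), then for every `N ≥ 1`
there is `n ≥ N` such that the first `4n` coefficients of `A_R^{(n)}` have full entropy
`n·H(p)`. -/
theorem stmt12 {F : Type*} [Field F] [CharZero F] [Countable F] {m : ℕ}
    (a b : Fin m → ℤ) (hab : Function.Injective fun j => (a j, b j))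
    (ξ : PMF (Fin m)) (hξ : ∀ j, ξ j ≠ 0) (R : PowerSeries F)
    (hno : ∀ (n : ℕ) (ω ω' : Fin n → Fin m), ω ≠ ω' → ARfun a b R ω ≠ ARfun a b R ω') :
    ∀ N : ℕ, 1 ≤ N → ∃ n, N ≤ n ∧ Hcoeff ξ a b R n (4 * n) = (n : ℝ) * pmfEntropy ξ := by
  intro N hN
  obtain ⟨n, hn, hinj⟩ := key_injective a b R hno N hN
  refine ⟨n, hn, ?_⟩
  unfold Hcoeff
  rw [pmfEntropy_map_injective _ hinj, pmfEntropy_iidWord]
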